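/- (Pointwise diamagnetic inequality.) Let d ≥ 1, let u : ℝ^d → ℂ be differentiable at a point x₀ with u(x₀) ≠ 0, and let a ∈ ℝ^d. Then the function x ↦ |u(x)| is differentiable at x₀ and for every coordinate index j one has | ∂ⱼ|u|(x₀) | ≤ | ∂ⱼu(x₀) − i·aⱼ·u(x₀) |. Consequently Σⱼ (∂ⱼ|u|(x₀))² ≤ Σⱼ |∂ⱼu(x₀) − i·aⱼ·u(x₀)|², i.e. the Euclidean norm of the gradient of |u| at x₀ is bounded by the Euclidean norm of the covariant gradient (∇ − ia)u at x₀. -/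

import Mathlib

open scoped RealInnerProductSpace

private lemma diamag_norm_deriv {E : Type*} [NormedAddCommGroup E] [NormedSpace ℝ E]
    (u : E → ℂ) (x₀ : E) (f' : E →L[ℝ] ℂ) (h : HasFDerivAt u f' x₀) (h0 : u x₀ ≠ 0) :
    HasFDerivAt (fun x => ‖u x‖) ((‖u x₀‖⁻¹ • (innerSL ℝ (u x₀))).comp f') x₀ := by
  have h1 : HasFDerivAt (‖u ·‖ ^ 2) (2 • (innerSL ℝ (u x₀)).comp f') x₀ := h.norm_sq
  have hpos : (0:ℝ) < ‖u x₀‖ := norm_pos_iff.mpr h0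
  have h2 : HasDerivAt Real.sqrt (1 / (2 * Real.sqrt (‖u x₀‖^2))) (‖u x₀‖^2) :=
    Real.hasDerivAt_sqrt (by positivity)
  have := h2.comp_hasFDerivAt x₀ h1
  convert this using 1
  · rfl
  · rfl
  · funext x; simp [Real.sqrt_sq (norm_nonneg _)]
  · ext v
    simp [Real.sqrt_sq hpos.le, smul_smul]
    field_simp

private lemma diamag_key (z₀ w : ℂ) (t : ℝ) (h0 : z₀ ≠ 0) :
    |‖z₀‖⁻¹ * ⟪z₀, w⟫| ≤ ‖w - Complex.I * (t:ℂ) * z₀‖ := by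
  have hpos : (0:ℝ) < ‖z₀‖ := norm_pos_iff.mpr h0
  have hzero : ⟪z₀, Complex.I * (t:ℂ) * z₀⟫ = 0 := by
    rw [real_inner_eq_re_inner ℂ]
    simp [RCLike.inner_apply, Complex.mul_re, Complex.mul_im]
    ring
  have heq : ⟪z₀, w⟫ = ⟪z₀, w - Complex.I * (t:ℂ) * z₀⟫ := by
    rw [inner_sub_right, hzero, sub_zero]
  rw [heq, abs_mul, abs_of_nonneg (inv_nonneg.mpr hpos.le)]
  calc ‖z₀‖⁻¹ * |⟪z₀, w - Complex.I * (t:ℂ) * z₀⟫|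
      ≤ ‖z₀‖⁻¹ * (‖z₀‖ * ‖w - Complex.I * (t:ℂ) * z₀‖) := by
        gcongr; exact abs_real_inner_le_norm _ _
    _ = ‖w - Complex.I * (t:ℂ) * z₀‖ := by rw [inv_mul_eq_div, mul_div_assoc, mul_comm, div_mul_cancel₀ _ (ne_of_gt hpos)]

/-- pointwise diamagnetic inequality. If `u` is differentiable at `x₀`
with `u x₀ ≠ 0` and `a ∈ ℝ^d`, then `|u|` is differentiable at `x₀` with
`|∂ⱼ|u|(x₀)| ≤ |∂ⱼu(x₀) − i aⱼ u(x₀)|` for every `j`, and consequently the Euclidean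
norm of `∇|u|(x₀)` is bounded by that of the covariant gradient `(∇ − ia)u(x₀)`. -/
theorem pointwise_diamagnetic_inequality
    (d : ℕ) (hd : 1 ≤ d)
    (u : EuclideanSpace ℝ (Fin d) → ℂ) (x₀ : EuclideanSpace ℝ (Fin d))
    (hu : DifferentiableAt ℝ u x₀) (hu0 : u x₀ ≠ 0)
    (a : EuclideanSpace ℝ (Fin d)) :
    DifferentiableAt ℝ (fun x => ‖u x‖) x₀ ∧
    (∀ j : Fin d,
      |fderiv ℝ (fun x => ‖u x‖) x₀ (EuclideanSpace.single j 1)| ≤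
        ‖fderiv ℝ u x₀ (EuclideanSpace.single j 1) - Complex.I * (a j : ℂ) * u x₀‖) ∧
    (∑ j : Fin d, (fderiv ℝ (fun x => ‖u x‖) x₀ (EuclideanSpace.single j 1)) ^ 2) ≤
      (∑ j : Fin d,
        ‖fderiv ℝ u x₀ (EuclideanSpace.single j 1) - Complex.I * (a j : ℂ) * u x₀‖ ^ 2) := by
  have hD := diamag_norm_deriv u x₀ (fderiv ℝ u x₀) hu.hasFDerivAt hu0
  have hfd := hD.fderiv
  have key : ∀ j : Fin d,
      |fderiv ℝ (fun x => ‖u x‖) x₀ (EuclideanSpace.single j 1)| ≤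
        ‖fderiv ℝ u x₀ (EuclideanSpace.single j 1) - Complex.I * (a j : ℂ) * u x₀‖ := by
    intro j
    rw [hfd]
    simpa using diamag_key (u x₀) (fderiv ℝ u x₀ (EuclideanSpace.single j 1)) (a j) hu0
  refine ⟨hD.differentiableAt, key, ?_⟩
  apply Finset.sum_le_sum
  intro j _
  have := key j
  calc (fderiv ℝ (fun x => ‖u x‖) x₀ (EuclideanSpace.single j 1)) ^ 2
      = |fderiv ℝ (fun x => ‖u x‖) x₀ (EuclideanSpace.single j 1)| ^ 2 := (sq_abs _).symm
    _ ≤ ‖fderiv ℝ u x₀ (EuclideanSpace.single j 1) - Complex.I * (a j : ℂ) * u x₀‖ ^ 2 := by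
        gcongr
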